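/- Let (Ω, μ) be a finite measure space, W a real inner product space, D a linear map from the real vector space of functions Ω → ℝ to W, and B a symmetric bilinear form on the real vector space of functions Ω → ℝ. Fix ε ∈ ℝ, τ > 0 and a positive integer M. Let φ_0, …, φ_M be measurable functions in L⁴(μ) and μ_1, …, μ_M measurable functions in L²(μ), and set δφ_m := (φ_m − φ_{m−1})/τ. Assume for every 1 ≤ m ≤ M: (i) ∫_Ω δφ_m · μ_m dμ + ‖D μ_m‖² = 0, and (ii) ∫_Ω (φ_m³ + (1−ε)φ_m) · δφ_m dμ + B(φ_m, δφ_m) − 2⟨D φ_{m−1}, D δφ_m⟩ − ∫_Ω μ_m · δφ_m dμ = 0. Define F(φ) := (1/4)∫_Ω φ⁴ dμ + ((1−ε)/2)∫_Ω φ² dμ − ‖D φ‖² + (1/2) B(φ, φ). Then for every 1 ≤ ℓ ≤ M: F(φ_ℓ) + τ Σ_{m=1}^{ℓ} ‖D μ_m‖² + τ² Σ_{m=1}^{ℓ} [ ((1−ε)/2) ∫_Ω (δφ_m)² dμ + ‖D δφ_m‖² + (1/4) ∫_Ω ((φ_m² − φ_{m−1}²)/τ)² dμ + (1/2) ∫_Ω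 (φ_m · δφ_m)² dμ + (1/2) B(δφ_m, δφ_m) ] = F(φ_0). -/

import Mathlib

open MeasureTheory Finset
open scoped RealInnerProductSpace ENNReal

lemma pfc_memL2_mul {Ω : Type*} [MeasurableSpace Ω] {P : Measure Ω} {f g : Ω → ℝ}
    (hf : MemLp f 4 P) (hg : MemLp g 4 P) : MemLp (fun x => f x * g x) 2 P := by
  have : ENNReal.HolderTriple 4 4 2 := ⟨by
    rw [← two_mul, show (4:ℝ≥0∞) = 2 * 2 by norm_num, ENNReal.mul_inv (by simp) (by simp), ← mul_assoc,
      ENNReal.mul_inv_cancel (by simp) (by simp), one_mul]⟩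
  have h := hf.smul hg (p := 4) (q := 4) (r := 2)
  exact (by simpa [Pi.smul_apply, smul_eq_mul, mul_comm] using h : MemLp (f * g) 2 P)

lemma pfc_int_mul {Ω : Type*} [MeasurableSpace Ω] {P : Measure Ω} {f g : Ω → ℝ}
    (hf : MemLp f 2 P) (hg : MemLp g 2 P) : Integrable (fun x => f x * g x) P := by
  have h := hf.smul hg (p := 2) (q := 2) (r := 1)
  exact memLp_one_iff_integrable.mp (by simpa [Pi.smul_apply, smul_eq_mul, mul_comm] using h : MemLp (f * g) 1 P)

/-- One-step energy identity. -/
lemma pfc_step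
    {Ω : Type*} [MeasurableSpace Ω] (P : Measure Ω) [IsFiniteMeasure P]
    {W : Type*} [NormedAddCommGroup W] [InnerProductSpace ℝ W]
    (D : (Ω → ℝ) →ₗ[ℝ] W)
    (B : (Ω → ℝ) →ₗ[ℝ] (Ω → ℝ) →ₗ[ℝ] ℝ)
    (hBsymm : ∀ u v : Ω → ℝ, B u v = B v u)
    (ε τ : ℝ) (hτ : 0 < τ)
    (a b δm μm : Ω → ℝ)
    (ha4 : MemLp a 4 P) (hb4 : MemLp b 4 P) (hμ2 : MemLp μm 2 P)
    (hδ : δm = fun x => (a x - b x) / τ)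
    (s1 : (∫ x, δm x * μm x ∂P) + ‖D μm‖ ^ 2 = 0)
    (s2 : (∫ x, ((a x) ^ 3 + (1 - ε) * a x) * δm x ∂P)
        + B a δm - 2 * ⟪D b, D δm⟫ - (∫ x, μm x * δm x ∂P) = 0) :
    ((1 / 4) * (∫ x, (a x) ^ 4 ∂P) + ((1 - ε) / 2) * (∫ x, (a x) ^ 2 ∂P)
        - ‖D a‖ ^ 2 + (1 / 2) * B a a)
      + τ * ‖D μm‖ ^ 2
      + τ ^ 2 * (((1 - ε) / 2) * (∫ x, (δm x) ^ 2 ∂P)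
          + ‖D δm‖ ^ 2
          + (1 / 4) * (∫ x, (((a x) ^ 2 - (b x) ^ 2) / τ) ^ 2 ∂P)
          + (1 / 2) * (∫ x, (a x * δm x) ^ 2 ∂P)
          + (1 / 2) * B δm δm)
    = (1 / 4) * (∫ x, (b x) ^ 4 ∂P) + ((1 - ε) / 2) * (∫ x, (b x) ^ 2 ∂P)
        - ‖D b‖ ^ 2 + (1 / 2) * B b b := by
  have hτ0 : τ ≠ 0 := hτ.ne'
  -- membership facts
  have hδ4 : MemLp δm 4 P := by
    have h := (ha4.sub hb4).const_mul τ⁻¹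
    rw [hδ]
    refine h.ae_eq (Filter.Eventually.of_forall fun x => ?_)
    simp only [Pi.sub_apply]
    rw [div_eq_inv_mul]
  have ha2 : MemLp a 2 P := ha4.mono_exponent (by norm_num)
  have hb2 : MemLp b 2 P := hb4.mono_exponent (by norm_num)
  have hδ2 : MemLp δm 2 P := hδ4.mono_exponent (by norm_num)
  have haa : MemLp (fun x => a x * a x) 2 P := pfc_memL2_mul ha4 ha4
  have hbb : MemLp (fun x => b x * b x) 2 P := pfc_memL2_mul hb4 hb4
  have haδ : MemLp (fun x => a x * δm x) 2 P := pfc_memL2_mul ha4 hδ4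
  have hg2 : MemLp (fun x => ((a x) ^ 2 - (b x) ^ 2) / τ) 2 P := by
    have h := (haa.sub hbb).const_mul τ⁻¹
    refine h.ae_eq (Filter.Eventually.of_forall fun x => ?_)
    simp only [Pi.sub_apply]
    field_simp
  -- integrability facts
  have iA4b : Integrable (fun x => (b x) ^ 4) P :=
    (pfc_int_mul hbb hbb).congr (Filter.Eventually.of_forall fun x => by ring)
  have iB3 : Integrable (fun x => (a x) ^ 3 * δm x) P :=
    (pfc_int_mul haa haδ).congr (Filter.Eventually.of_forall fun x => by ring)
  have iC : Integrable (fun x => (((a x) ^ 2 - (b x) ^ 2) / τ) ^ 2) P :=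
    (pfc_int_mul hg2 hg2).congr (Filter.Eventually.of_forall fun x => by ring)
  have iD : Integrable (fun x => (a x * δm x) ^ 2) P :=
    (pfc_int_mul haδ haδ).congr (Filter.Eventually.of_forall fun x => by ring)
  have i2 : Integrable (fun x => a x * δm x) P := pfc_int_mul ha2 hδ2
  have iδ2 : Integrable (fun x => (δm x) ^ 2) P :=
    (pfc_int_mul hδ2 hδ2).congr (Filter.Eventually.of_forall fun x => by ring)
  have ib2 : Integrable (fun x => (b x) ^ 2) P :=
    (pfc_int_mul hb2 hb2).congr (Filter.Eventually.of_forall fun x => by ring)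
  -- pointwise identities
  have hδx : ∀ x, δm x = (a x - b x) / τ := fun x => by rw [hδ]
  have E1 : (∫ x, (a x) ^ 4 ∂P)
      = (∫ x, (b x) ^ 4 ∂P) + 4 * τ * (∫ x, (a x) ^ 3 * δm x ∂P)
        - τ ^ 2 * (∫ x, (((a x) ^ 2 - (b x) ^ 2) / τ) ^ 2 ∂P)
        - 2 * τ ^ 2 * (∫ x, (a x * δm x) ^ 2 ∂P) := by
    have key : (fun x => (a x) ^ 4)
        = fun x => ((b x) ^ 4 + 4 * τ * ((a x) ^ 3 * δm x)
            - τ ^ 2 * ((((a x) ^ 2 - (b x) ^ 2) / τ) ^ 2)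
            - (2 * τ ^ 2) * ((a x * δm x) ^ 2)) := by
      funext x; rw [hδx x]; field_simp; ring
    have h1 : Integrable (fun x => (b x) ^ 4 + 4 * τ * ((a x) ^ 3 * δm x)) P :=
      iA4b.add (iB3.const_mul _)
    have hc : Integrable (fun x => τ ^ 2 * ((((a x) ^ 2 - (b x) ^ 2) / τ) ^ 2)) P :=
      iC.const_mul _
    have hd : Integrable (fun x => (2 * τ ^ 2) * ((a x * δm x) ^ 2)) P := iD.const_mul _
    have h12 : Integrable (fun x => ((b x) ^ 4 + 4 * τ * ((a x) ^ 3 * δm x)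
        - τ ^ 2 * ((((a x) ^ 2 - (b x) ^ 2) / τ) ^ 2))) P := h1.sub hc
    rw [key, integral_sub h12 hd, integral_sub h1 hc,
      integral_add iA4b (iB3.const_mul _), integral_const_mul, integral_const_mul,
      integral_const_mul]
  have E2 : (∫ x, (a x) ^ 2 ∂P)
      = (∫ x, (b x) ^ 2 ∂P) + 2 * τ * (∫ x, a x * δm x ∂P)
        - τ ^ 2 * (∫ x, (δm x) ^ 2 ∂P) := by
    have key : (fun x => (a x) ^ 2)
        = fun x => ((b x) ^ 2 + 2 * τ * (a x * δm x) - τ ^ 2 * ((δm x) ^ 2)) := by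
      funext x; rw [hδx x]; field_simp; ring
    have h1 : Integrable (fun x => (b x) ^ 2 + 2 * τ * (a x * δm x)) P :=
      ib2.add (i2.const_mul _)
    have h12 : Integrable (fun x => (b x) ^ 2 + 2 * τ * (a x * δm x)) P := h1
    rw [key, integral_sub h12 (iδ2.const_mul _), integral_add ib2 (i2.const_mul _),
      integral_const_mul, integral_const_mul]
  have hab : a = b + τ • δm := by
    funext x
    simp only [Pi.add_apply, Pi.smul_apply, smul_eq_mul, hδx x]
    field_simp
    ring
  have hDa : D a = D b + τ • D δm := by rw [hab, map_add, _root_.map_smul]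
  have E3 : ‖D a‖ ^ 2 = ‖D b‖ ^ 2 + 2 * τ * ⟪D b, D δm⟫ + τ ^ 2 * ‖D δm‖ ^ 2 := by
    rw [hDa, norm_add_sq_real, real_inner_smul_right, norm_smul]
    simp only [Real.norm_eq_abs, mul_pow, sq_abs]
    ring
  have E4 : B a a = B b b + 2 * τ * B a δm - τ ^ 2 * B δm δm := by
    rw [hab]
    simp only [map_add, _root_.map_smul, LinearMap.add_apply, LinearMap.smul_apply,
      smul_eq_mul]
    rw [hBsymm δm b]
    ring
  have Esplit : (∫ x, ((a x) ^ 3 + (1 - ε) * a x) * δm x ∂P)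
      = (∫ x, (a x) ^ 3 * δm x ∂P) + (1 - ε) * (∫ x, a x * δm x ∂P) := by
    have key : (fun x => ((a x) ^ 3 + (1 - ε) * a x) * δm x)
        = fun x => ((a x) ^ 3 * δm x + (1 - ε) * (a x * δm x)) := by
      funext x; ring
    rw [key, integral_add iB3 (i2.const_mul _), integral_const_mul]
  have Em : (∫ x, δm x * μm x ∂P) = (∫ x, μm x * δm x ∂P) := by
    congr 1; funext x; ring
  rw [Esplit] at s2
  rw [Em] at s1
  linear_combination (1/4) * E1 + ((1 - ε)/2) * E2 - E3 + (1/2) * E4 + τ * s2 + τ * s1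

/-- Discrete energy law for the convex-splitting C⁰-IP scheme for the
phase field crystal equation (Lemma 3.6), stated abstractly. -/
theorem pfc_discrete_energy_law
    {Ω : Type*} [MeasurableSpace Ω] (P : Measure Ω) [IsFiniteMeasure P]
    {W : Type*} [NormedAddCommGroup W] [InnerProductSpace ℝ W]
    (D : (Ω → ℝ) →ₗ[ℝ] W)
    (B : (Ω → ℝ) →ₗ[ℝ] (Ω → ℝ) →ₗ[ℝ] ℝ)
    (hBsymm : ∀ u v : Ω → ℝ, B u v = B v u)
    (ε τ : ℝ) (hτ : 0 < τ) (M : ℕ) (hM : 0 < M)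
    (φ μc : ℕ → Ω → ℝ)
    (hφmeas : ∀ m ≤ M, Measurable (φ m))
    (hφL4 : ∀ m ≤ M, MemLp (φ m) 4 P)
    (hμmeas : ∀ m, 1 ≤ m → m ≤ M → Measurable (μc m))
    (hμL2 : ∀ m, 1 ≤ m → m ≤ M → MemLp (μc m) 2 P)
    (δφ : ℕ → Ω → ℝ)
    (hδφ : ∀ m, δφ m = fun x => (φ m x - φ (m - 1) x) / τ)
    (hscheme1 : ∀ m, 1 ≤ m → m ≤ M →
      (∫ x, δφ m x * μc m x ∂P) + ‖D (μc m)‖ ^ 2 = 0)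
    (hscheme2 : ∀ m, 1 ≤ m → m ≤ M →
      (∫ x, ((φ m x) ^ 3 + (1 - ε) * φ m x) * δφ m x ∂P)
        + B (φ m) (δφ m) - 2 * ⟪D (φ (m - 1)), D (δφ m)⟫
        - (∫ x, μc m x * δφ m x ∂P) = 0)
    (F : (Ω → ℝ) → ℝ)
    (hF : ∀ ψ : Ω → ℝ, F ψ =
      (1 / 4) * (∫ x, (ψ x) ^ 4 ∂P) + ((1 - ε) / 2) * (∫ x, (ψ x) ^ 2 ∂P)
        - ‖D ψ‖ ^ 2 + (1 / 2) * B ψ ψ) :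
    ∀ ℓ, 1 ≤ ℓ → ℓ ≤ M →
      F (φ ℓ) + τ * (∑ m ∈ Icc 1 ℓ, ‖D (μc m)‖ ^ 2)
        + τ ^ 2 * (∑ m ∈ Icc 1 ℓ,
            (((1 - ε) / 2) * (∫ x, (δφ m x) ^ 2 ∂P)
              + ‖D (δφ m)‖ ^ 2
              + (1 / 4) * (∫ x, (((φ m x) ^ 2 - (φ (m - 1) x) ^ 2) / τ) ^ 2 ∂P)
              + (1 / 2) * (∫ x, (φ m x * δφ m x) ^ 2 ∂P)
              + (1 / 2) * B (δφ m) (δφ m)))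
        = F (φ 0) := by
  suffices h : ∀ ℓ, ℓ ≤ M →
      F (φ ℓ) + τ * (∑ m ∈ Icc 1 ℓ, ‖D (μc m)‖ ^ 2)
        + τ ^ 2 * (∑ m ∈ Icc 1 ℓ,
            (((1 - ε) / 2) * (∫ x, (δφ m x) ^ 2 ∂P)
              + ‖D (δφ m)‖ ^ 2
              + (1 / 4) * (∫ x, (((φ m x) ^ 2 - (φ (m - 1) x) ^ 2) / τ) ^ 2 ∂P)
              + (1 / 2) * (∫ x, (φ m x * δφ m x) ^ 2 ∂P)
              + (1 / 2) * B (δφ m) (δφ m)))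
        = F (φ 0) by
    exact fun ℓ _ hℓ => h ℓ hℓ
  intro ℓ
  induction ℓ with
  | zero => intro _; simp
  | succ n ih =>
    intro hle
    have hn := ih (Nat.le_of_succ_le hle)
    rw [Finset.sum_Icc_succ_top (Nat.succ_le_succ (Nat.zero_le n)),
      Finset.sum_Icc_succ_top (Nat.succ_le_succ (Nat.zero_le n))]
    have h1 : 1 ≤ n + 1 := Nat.succ_le_succ (Nat.zero_le n)
    have hstep : F (φ (n + 1)) + τ * ‖D (μc (n + 1))‖ ^ 2
        + τ ^ 2 * (((1 - ε) / 2) * (∫ x, (δφ (n + 1) x) ^ 2 ∂P)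
            + ‖D (δφ (n + 1))‖ ^ 2
            + (1 / 4) * (∫ x, (((φ (n + 1) x) ^ 2 - (φ ((n + 1) - 1) x) ^ 2) / τ) ^ 2 ∂P)
            + (1 / 2) * (∫ x, (φ (n + 1) x * δφ (n + 1) x) ^ 2 ∂P)
            + (1 / 2) * B (δφ (n + 1)) (δφ (n + 1)))
        = F (φ n) := by
      rw [hF, hF]
      simp only [Nat.add_sub_cancel]
      exact pfc_step P D B hBsymm ε τ hτ (φ (n + 1)) (φ n) (δφ (n + 1)) (μc (n + 1))
        (hφL4 _ hle) (hφL4 _ (Nat.le_of_succ_le hle)) (hμL2 _ h1 hle)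
        (by simpa using hδφ (n + 1))
        (hscheme1 _ h1 hle)
        (by simpa using hscheme2 _ h1 hle)
    linear_combination hn + hstep
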